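/- A real polynomial has at most as many positive real roots (counted with multiplicity) as the number of sign changes in its sequence of nonzero coefficients (Descartes' rule of signs). -/

import Mathlib

open scoped Classical

/-- The number of sign changes in the sequence of nonzero coefficients of a real
polynomial, ordered by degree. -/
noncomputable def signChanges (P : Polynomial ℝ) : ℕ :=
  let l := ((List.range (P.natDegree + 1)).map P.coeff).filter (fun a => decide (a ≠ 0))
  (l.zip l.tail).countP (fun p => decide (p.1 * p.2 < 0))

namespace DescartesAux

/-- Recursive count of sign changes in a list (no filtering). -/
noncomputable def chg : List ℝ → ℕ
  | [] => 0
  | [_] => 0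
  | a :: b :: t => (if a * b < 0 then 1 else 0) + chg (b :: t)

lemma countP_eq_chg : ∀ l : List ℝ,
    (l.zip l.tail).countP (fun p => decide (p.1 * p.2 < 0)) = chg l
  | [] => rfl
  | [_] => rfl
  | a :: b :: t => by
    have h := countP_eq_chg (b :: t)
    simp only [List.tail_cons, List.zip_cons_cons] at h ⊢
    rw [List.countP_cons, h, chg]
    by_cases hab : a * b < 0 <;> simp [hab] <;> omega

noncomputable def fil (l : List ℝ) : List ℝ := l.filter (fun a => decide (a ≠ 0))

noncomputable def V (l : List ℝ) : ℕ := chg (fil l)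

noncomputable def firstNZ (l : List ℝ) : Option ℝ := (fil l).head?

lemma fil_cons_zero (l : List ℝ) : fil ((0:ℝ) :: l) = fil l := by
  simp [fil, List.filter_cons]

lemma fil_cons_ne {x : ℝ} (hx : x ≠ 0) (l : List ℝ) : fil (x :: l) = x :: fil l := by
  simp [fil, List.filter_cons, hx]

lemma chg_le_cons (x : ℝ) (l : List ℝ) : chg l ≤ chg (x :: l) := by
  cases l with
  | nil => simp [chg]
  | cons b t => rw [chg]; omega

lemma V_cons_zero (l : List ℝ) : V ((0:ℝ) :: l) = V l := by
  simp only [V, fil_cons_zero]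

lemma V_cons_le (x : ℝ) (l : List ℝ) : V l ≤ V (x :: l) := by
  by_cases hx : x = 0
  · subst hx; rw [V_cons_zero]
  · simp only [V, fil_cons_ne hx]; exact chg_le_cons _ _

lemma firstNZ_cons_zero (l : List ℝ) : firstNZ ((0:ℝ) :: l) = firstNZ l := by
  simp only [firstNZ, fil_cons_zero]

lemma firstNZ_cons_ne {x : ℝ} (hx : x ≠ 0) (l : List ℝ) : firstNZ (x :: l) = some x := by
  rw [firstNZ, fil_cons_ne hx]; rfl

lemma firstNZ_ne_zero {l : List ℝ} {g : ℝ} (h : firstNZ l = some g) : g ≠ 0 := by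
  have hg : g ∈ fil l := List.mem_of_mem_head? (by rw [← firstNZ, h]; rfl)
  have := List.of_mem_filter hg
  simpa using this

lemma fil_eq_cons {l : List ℝ} {g : ℝ} (h : firstNZ l = some g) :
    ∃ s, fil l = g :: s := by
  rw [firstNZ] at h
  cases hl : fil l with
  | nil => rw [hl] at h; simp at h
  | cons b t =>
    rw [hl] at h
    simp at h
    exact ⟨t, by rw [h]⟩

lemma V_cons_neg {l : List ℝ} {g x : ℝ} (h : firstNZ l = some g) (hx : x * g < 0) :
    V (x :: l) = V l + 1 := by
  have hx0 : x ≠ 0 := by rintro rfl; simp at hx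
  obtain ⟨s, hs⟩ := fil_eq_cons h
  rw [V, V, fil_cons_ne hx0, hs, chg, if_pos hx]
  omega

lemma V_cons_pos {l : List ℝ} {g x : ℝ} (h : firstNZ l = some g) (hx : 0 < x * g) :
    V (x :: l) = V l := by
  have hx0 : x ≠ 0 := by rintro rfl; simp at hx
  obtain ⟨s, hs⟩ := fil_eq_cons h
  rw [V, V, fil_cons_ne hx0, hs, chg, if_neg (by linarith)]
  omega

/-- Coefficient list of `(X - a) * Q + C c`-style transform: `D a c q` is the list
`[c - a q₀, q₀ - a q₁, ..., qₙ₋₁ - a qₙ, qₙ]`. -/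
noncomputable def D (a : ℝ) : ℝ → List ℝ → List ℝ
  | c, [] => [c]
  | c, q0 :: t => (c - a * q0) :: D a q0 t

lemma D_length (a : ℝ) : ∀ (q : List ℝ) (c : ℝ), (D a c q).length = q.length + 1
  | [], _ => rfl
  | q0 :: t, c => by rw [D]; simp [D_length a t q0]

lemma D_getD (a : ℝ) : ∀ (q : List ℝ) (c : ℝ) (i : ℕ),
    (D a c q).getD i 0 = (if i = 0 then c else q.getD (i - 1) 0) - a * q.getD i 0
  | [], c, 0 => by simp [D]
  | [], c, (j+1) => by simp [D]
  | q0 :: t, c, 0 => by simp [D]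
  | q0 :: t, c, (j+1) => by
    rw [D]
    simp only [List.getD_cons_succ]
    rw [D_getD a t q0 j]
    cases j with
    | zero => simp
    | succ k => simp

/-- helper sign lemmas -/
lemma sign_pos_trans {x y z : ℝ} (h1 : 0 < x * z) (h2 : 0 < y * z) : 0 < x * y := by
  nlinarith [mul_pos h1 h2, sq_nonneg z]

lemma sign_mix {x y z : ℝ} (h1 : x * z < 0) (h2 : 0 < y * z) : x * y < 0 := by
  nlinarith [mul_neg_of_neg_of_pos h1 h2, sq_nonneg z]

lemma head_neg {a c q0 : ℝ} (ha : 0 < a) (hq0 : q0 ≠ 0) (hc : c * q0 ≤ 0) :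
    (c - a * q0) * q0 < 0 := by
  nlinarith [mul_pos ha (mul_self_pos.mpr hq0)]

lemma fil_D_of_all_zero (a : ℝ) : ∀ (t : List ℝ), (∀ y ∈ t, y = 0) →
    ∀ x : ℝ, fil (D a x t) = fil [x]
  | [], _, x => rfl
  | t0 :: t', h, x => by
    have ht0 : t0 = 0 := h t0 (by simp)
    subst ht0
    have ht' : ∀ y ∈ t', y = 0 := fun y hy => h y (by simp [hy])
    have hrec : fil (D a 0 t') = fil [0] := fil_D_of_all_zero a t' ht' 0
    have hnil : fil [(0:ℝ)] = [] := by simp [fil]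
    rw [D]
    have hx : x - a * 0 = x := by ring
    rw [hx]
    by_cases hx0 : x = 0
    · subst hx0
      rw [fil_cons_zero, hrec]
    · rw [fil_cons_ne hx0, hrec, hnil]
      simp [fil, hx0]

/-- If the first nonzero of `t` is `gt` and `x * gt < 0`, then the head of `D a x t`
is nonzero with the same sign as `x`. -/
lemma firstNZ_D_head {a : ℝ} (ha : 0 < a) : ∀ {t : List ℝ} {gt x : ℝ},
    firstNZ t = some gt → x * gt < 0 →
    ∃ h', firstNZ (D a x t) = some h' ∧ 0 < h' * x := by
  intro t gt x ht hx
  cases t with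
  | nil => rw [firstNZ] at ht; simp [fil] at ht
  | cons t0 t' =>
    rw [D]
    by_cases ht0 : t0 = 0
    · subst ht0
      have hx0 : x ≠ 0 := by rintro rfl; simp at hx
      have hh : x - a * 0 ≠ 0 := by simpa using hx0
      refine ⟨x - a * 0, firstNZ_cons_ne hh _, ?_⟩
      have : (x - a * 0) * x = x * x := by ring
      rw [this]; exact mul_self_pos.mpr hx0
    · have hgt : gt = t0 := by
        rw [firstNZ_cons_ne ht0] at ht
        exact (Option.some_inj.mp ht).symm
      subst hgt
      have hx0 : x ≠ 0 := by rintro rfl; simp at hx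
      have hpos : 0 < (x - a * gt) * x := by nlinarith [mul_self_pos.mpr hx0]
      have hh : x - a * gt ≠ 0 := by
        intro h0; rw [h0] at hpos; simp at hpos
      exact ⟨x - a * gt, firstNZ_cons_ne hh _, hpos⟩

/-- The key combinatorial lemma. -/
lemma key {a : ℝ} (ha : 0 < a) : ∀ (q : List ℝ) (g : ℝ), firstNZ q = some g → ∀ c : ℝ,
    (c * g ≤ 0 → V q + 1 ≤ V (D a c q)) ∧
    (0 < c * g → V q + 1 ≤ V (D a c q) ∨
      (V q ≤ V (D a c q) ∧ ∃ g', firstNZ (D a c q) = some g' ∧ 0 < g' * g)) := by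
  intro q
  induction q with
  | nil => intro g hg; rw [firstNZ] at hg; simp [fil] at hg
  | cons q0 t IH =>
    intro g hg c
    by_cases hq0 : q0 = 0
    · subst hq0
      rw [firstNZ_cons_zero] at hg
      have hVq : V ((0:ℝ) :: t) = V t := V_cons_zero t
      have hIH := (IH g hg 0).1 (by simp)
      have hle : V (D a 0 t) ≤ V (D a c ((0:ℝ) :: t)) := by
        rw [D]; exact V_cons_le _ _
      constructor <;> intro hc
      · rw [hVq]; omega
      · left; rw [hVq]; omega
    · have hgq : g = q0 := by
        rw [firstNZ_cons_ne hq0] at hg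
        exact (Option.some_inj.mp hg).symm
      subst hgq
      rw [D]
      cases hft : firstNZ t with
      | none =>
        -- t is all zeros
        have htnil : fil t = [] := by rwa [firstNZ, List.head?_eq_none_iff] at hft
        have hall : ∀ y ∈ t, y = 0 := by
          intro y hy
          have := List.filter_eq_nil_iff.mp htnil y hy
          simpa using this
        have hVq : V (g :: t) = 0 := by
          rw [V, fil_cons_ne hq0, htnil]; rfl
        have hfD : fil (D a g t) = [g] := by
          rw [fil_D_of_all_zero a t hall g]; simp [fil, hq0]
        constructor <;> intro hc
        · have hneg : (c - a * g) * g < 0 := head_neg ha hq0 hc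
          have hne : c - a * g ≠ 0 := by intro h0; rw [h0] at hneg; simp at hneg
          have : V ((c - a * g) :: D a g t) = 1 := by
            rw [V, fil_cons_ne hne, hfD, chg, if_pos hneg]
            simp [chg]
          omega
        · rcases lt_trichotomy ((c - a * g) * g) 0 with hlt | heq | hgt
          · left
            have hne : c - a * g ≠ 0 := by intro h0; rw [h0] at hlt; simp at hlt
            have : V ((c - a * g) :: D a g t) = 1 := by
              rw [V, fil_cons_ne hne, hfD, chg, if_pos hlt]
              simp [chg]
            omega
          · right
            have hne : c - a * g = 0 := by
              rcases mul_eq_zero.mp heq with h | h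
              · exact h
              · exact absurd h hq0
            constructor
            · omega
            · refine ⟨g, ?_, mul_self_pos.mpr hq0⟩
              rw [hne, firstNZ_cons_zero, firstNZ]
              rw [hfD]; rfl
          · right
            have hne : c - a * g ≠ 0 := by intro h0; rw [h0] at hgt; simp at hgt
            constructor
            · omega
            · exact ⟨c - a * g, firstNZ_cons_ne hne _, hgt⟩
      | some gt =>
        have hgt0 : gt ≠ 0 := firstNZ_ne_zero hft
        have hIH := IH gt hft g
        rcases lt_trichotomy (g * gt) 0 with hneg | hzero | hpos
        · -- opposite signs: V (g :: t) = V t + 1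
          have hVq : V (g :: t) = V t + 1 := V_cons_neg hft hneg
          have hVDt : V t + 1 ≤ V (D a g t) := hIH.1 (le_of_lt hneg)
          obtain ⟨h', hh'1, hh'2⟩ := firstNZ_D_head ha hft hneg
          constructor <;> intro hc
          · have hhq : (c - a * g) * g < 0 := head_neg ha hq0 hc
            have hhh' : (c - a * g) * h' < 0 := sign_mix hhq hh'2
            have := V_cons_neg hh'1 hhh'
            rw [this]; omega
          · rcases lt_trichotomy ((c - a * g) * h') 0 with hlt | heq | hgt2
            · left
              have := V_cons_neg hh'1 hlt
              rw [this]; omega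
            · right
              have hne : c - a * g = 0 := by
                rcases mul_eq_zero.mp heq with h | h
                · exact h
                · exfalso; rw [h] at hh'2; simp at hh'2
              constructor
              · rw [hne, V_cons_zero]; omega
              · refine ⟨h', ?_, hh'2⟩
                rw [hne, firstNZ_cons_zero]; exact hh'1
            · right
              have := V_cons_pos hh'1 hgt2
              constructor
              · rw [this]; omega
              · have hne : c - a * g ≠ 0 := by intro h0; rw [h0] at hgt2; simp at hgt2
                refine ⟨c - a * g, firstNZ_cons_ne hne _, ?_⟩
                exact sign_pos_trans hgt2 (mul_comm h' g ▸ hh'2)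
        · exact absurd hzero (mul_ne_zero hq0 hgt0)
        · -- same signs: V (g :: t) = V t
          have hVq : V (g :: t) = V t := V_cons_pos hft hpos
          rcases hIH.2 hpos with hi | ⟨hVt', g', hg'1, hg'2⟩
          · -- V (D a g t) ≥ V t + 1
            constructor <;> intro hc
            · have := V_cons_le (c - a * g) (D a g t)
              rw [hVq]; omega
            · left
              have := V_cons_le (c - a * g) (D a g t)
              rw [hVq]; omega
          · have hg'g : 0 < g' * g := sign_pos_trans hg'2 hpos
            constructor <;> intro hc
            · have hhq : (c - a * g) * g < 0 := head_neg ha hq0 hc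
              have hhg' : (c - a * g) * g' < 0 := sign_mix hhq hg'g
              have := V_cons_neg hg'1 hhg'
              rw [this, hVq]; omega
            · rcases lt_trichotomy ((c - a * g) * g') 0 with hlt | heq | hgt2
              · left
                have := V_cons_neg hg'1 hlt
                rw [this, hVq]; omega
              · right
                have hne : c - a * g = 0 := by
                  rcases mul_eq_zero.mp heq with h | h
                  · exact h
                  · exfalso; rw [h] at hg'g; simp at hg'g
                constructor
                · rw [hne, V_cons_zero, hVq]; omega
                · refine ⟨g', ?_, hg'g⟩
                  rw [hne, firstNZ_cons_zero]; exact hg'1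
              · right
                have hne : c - a * g ≠ 0 := by intro h0; rw [h0] at hgt2; simp at hgt2
                have := V_cons_pos hg'1 hgt2
                constructor
                · rw [this, hVq]; omega
                · refine ⟨c - a * g, firstNZ_cons_ne hne _, ?_⟩
                  exact sign_pos_trans hgt2 (mul_comm g' g ▸ hg'g)

open Polynomial

noncomputable def cl (P : ℝ[X]) : List ℝ := (List.range (P.natDegree + 1)).map P.coeff

lemma signChanges_eq (P : ℝ[X]) : signChanges P = V (cl P) := by
  rw [signChanges, V, fil, cl]
  exact countP_eq_chg _

lemma cl_length (P : ℝ[X]) : (cl P).length = P.natDegree + 1 := by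
  simp [cl]

lemma cl_getD (P : ℝ[X]) (i : ℕ) : (cl P).getD i 0 = P.coeff i := by
  by_cases hi : i < P.natDegree + 1
  · rw [List.getD_eq_getElem _ _ (by simpa [cl_length] using hi)]
    simp [cl]
  · rw [List.getD_eq_default _ _ (by simp [cl_length]; omega)]
    exact (Polynomial.coeff_eq_zero_of_natDegree_lt (by omega)).symm

lemma coeff_X_sub_C_mul (a : ℝ) (Q : ℝ[X]) (i : ℕ) :
    ((X - C a) * Q).coeff i = (if i = 0 then 0 else Q.coeff (i - 1)) - a * Q.coeff i := by
  rw [sub_mul]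
  cases i with
  | zero =>
    simp [Polynomial.mul_coeff_zero]
  | succ j =>
    rw [Polynomial.coeff_sub, Polynomial.coeff_X_mul, Polynomial.coeff_C_mul]
    simp

lemma cl_mul {a : ℝ} {Q : ℝ[X]} (hQ : Q ≠ 0) :
    cl ((X - C a) * Q) = D a 0 (cl Q) := by
  have hmul : (X - C a) * Q ≠ 0 := mul_ne_zero (X_sub_C_ne_zero a) hQ
  have hdeg : ((X - C a) * Q).natDegree = Q.natDegree + 1 := by
    rw [natDegree_mul (X_sub_C_ne_zero a) hQ, natDegree_X_sub_C]; omega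
  have hlen : (cl ((X - C a) * Q)).length = (D a 0 (cl Q)).length := by
    rw [cl_length, hdeg, D_length, cl_length]
  apply List.ext_getElem hlen
  intro i h1 h2
  rw [← List.getD_eq_getElem _ 0 h1, ← List.getD_eq_getElem _ 0 h2]
  rw [D_getD]
  simp only [cl_getD]
  rw [coeff_X_sub_C_mul]

lemma firstNZ_cl {Q : ℝ[X]} (hQ : Q ≠ 0) : ∃ g, firstNZ (cl Q) = some g := by
  cases h : firstNZ (cl Q) with
  | some g => exact ⟨g, rfl⟩
  | none =>
    exfalso
    rw [firstNZ, List.head?_eq_none_iff] at h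
    apply hQ
    rw [← Polynomial.leadingCoeff_eq_zero]
    have hmem : Q.coeff Q.natDegree ∈ cl Q := by
      rw [cl]
      exact List.mem_map_of_mem (List.mem_range.mpr (by omega))
    have h3 := List.filter_eq_nil_iff.mp h _ hmem
    have h2 : Q.coeff Q.natDegree = 0 := by
      by_contra hne
      exact h3 (decide_eq_true hne)
    rw [Polynomial.leadingCoeff]
    exact h2

lemma signChanges_mul {a : ℝ} (ha : 0 < a) {Q : ℝ[X]} (hQ : Q ≠ 0) :
    signChanges Q + 1 ≤ signChanges ((X - C a) * Q) := by
  rw [signChanges_eq, signChanges_eq, cl_mul hQ]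
  obtain ⟨g, hg⟩ := firstNZ_cl hQ
  exact (key ha (cl Q) g hg 0).1 (by simp)

lemma main_aux : ∀ (n : ℕ) (P : ℝ[X]), P.natDegree ≤ n →
    (P.roots.filter (fun x => 0 < x)).card ≤ signChanges P := by
  intro n
  induction n with
  | zero =>
    intro P hP
    by_cases hP0 : P = 0
    · simp [hP0]
    · have h1 : Multiset.card P.roots = 0 := by
        have := Polynomial.card_roots' P
        omega
      have : P.roots = 0 := Multiset.card_eq_zero.mp h1
      simp [this]
  | succ n IH =>
    intro P hP
    by_cases hP0 : P = 0
    · simp [hP0]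
    by_cases hr : ∃ a ∈ P.roots, 0 < a
    · obtain ⟨a, ham, hapos⟩ := hr
      have hroot : P.IsRoot a := Polynomial.isRoot_of_mem_roots ham
      obtain ⟨Q, hPQ⟩ := Polynomial.dvd_iff_isRoot.mpr hroot
      have hQ0 : Q ≠ 0 := by
        rintro rfl
        rw [mul_zero] at hPQ
        exact hP0 hPQ
      have hdeg : P.natDegree = Q.natDegree + 1 := by
        rw [hPQ, natDegree_mul (X_sub_C_ne_zero a) hQ0, natDegree_X_sub_C]
        omega
      have hQdeg : Q.natDegree ≤ n := by omega
      have hroots : P.roots = {a} + Q.roots := by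
        rw [hPQ, Polynomial.roots_mul (by rw [← hPQ]; exact hP0), Polynomial.roots_X_sub_C]
      have hcard : (P.roots.filter (fun x => 0 < x)).card
          = (Q.roots.filter (fun x => 0 < x)).card + 1 := by
        rw [hroots, Multiset.filter_add]
        rw [Multiset.filter_singleton, if_pos hapos]
        simp
      rw [hcard, hPQ]
      have := IH Q hQdeg
      have := signChanges_mul hapos hQ0
      omega
    · push_neg at hr
      have : P.roots.filter (fun x => 0 < x) = 0 :=
        Multiset.filter_eq_nil.mpr fun a ha => not_lt.mpr (hr a ha)
      simp [this]

end DescartesAux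

/-- Descartes' rule of signs: a real polynomial has at most as many strictly positive
real roots (counted with multiplicity) as sign changes in its coefficient sequence. -/
theorem descartes_rule_of_signs (P : Polynomial ℝ) :
    (P.roots.filter (fun x => 0 < x)).card ≤ signChanges P :=
  DescartesAux.main_aux P.natDegree P le_rfl
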